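/- Let 2 ≤ g₁ < g₂ < … < g_e be coprime positive integers forming a minimal generating system of the numerical semigroup S = ⟨g₁,…,g_e⟩, let F be its Frobenius number and n = |S ∩ [0, F]|. If S is almost-symmetric, then F + 1 ≤ e·n (i.e., S satisfies Wilf's conjecture). -/

import Mathlib

namespace ASWilf

variable {e : ℕ} {g : Fin e → ℤ} {S : Set ℤ}

private lemma memS (hS : S = {x : ℤ | ∃ a : Fin e → ℕ, x = ∑ i, (a i : ℤ) * g i})
    {x : ℤ} : x ∈ S ↔ ∃ a : Fin e → ℕ, x = ∑ i, (a i : ℤ) * g i := by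
  subst hS; rfl

private lemma zero_mem (hS : S = {x : ℤ | ∃ a : Fin e → ℕ, x = ∑ i, (a i : ℤ) * g i}) :
    (0 : ℤ) ∈ S := (memS hS).mpr ⟨fun _ => 0, by simp⟩

private lemma gen_mem (hS : S = {x : ℤ | ∃ a : Fin e → ℕ, x = ∑ i, (a i : ℤ) * g i})
    (i : Fin e) : g i ∈ S := by
  refine (memS hS).mpr ⟨fun j => if j = i then 1 else 0, ?_⟩
  rw [Finset.sum_eq_single i]
  · simp
  · intro b _ hb; simp [hb]
  · simp

private lemma glb (he0 : 0 < e) (hg2 : 2 ≤ g ⟨0, he0⟩) (hmono : StrictMono g) (i : Fin e) :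
    2 ≤ g i := by
  have : g ⟨0, he0⟩ ≤ g i := hmono.monotone (by simp [Fin.le_def])
  linarith

private lemma mem_ge (he0 : 0 < e) (hg2 : 2 ≤ g ⟨0, he0⟩) (hmono : StrictMono g)
    (hS : S = {x : ℤ | ∃ a : Fin e → ℕ, x = ∑ i, (a i : ℤ) * g i})
    {x : ℤ} (hx : x ∈ S) (h0 : x ≠ 0) : g ⟨0, he0⟩ ≤ x := by
  obtain ⟨a, ha⟩ := (memS hS).mp hx
  have hex : ∃ i, a i ≠ 0 := by
    by_contra h
    push_neg at h
    exact h0 (by simp [ha, h])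
  obtain ⟨i, hi⟩ := hex
  have h1 : (a i : ℤ) * g i ≤ x := by
    rw [ha]
    exact Finset.single_le_sum
      (f := fun j => (a j : ℤ) * g j)
      (fun j _ => mul_nonneg (Int.natCast_nonneg _) (by linarith [glb he0 hg2 hmono j]))
      (Finset.mem_univ i)
  have h2 : (1 : ℤ) ≤ (a i : ℤ) := by exact_mod_cast Nat.one_le_iff_ne_zero.mpr hi
  have h3 : g ⟨0, he0⟩ ≤ g i := hmono.monotone (by simp [Fin.le_def])
  nlinarith [glb he0 hg2 hmono i]

private lemma mem_nonneg (he0 : 0 < e) (hg2 : 2 ≤ g ⟨0, he0⟩) (hmono : StrictMono g)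
    (hS : S = {x : ℤ | ∃ a : Fin e → ℕ, x = ∑ i, (a i : ℤ) * g i})
    {x : ℤ} (hx : x ∈ S) : 0 ≤ x := by
  rcases eq_or_ne x 0 with h | h
  · simp [h]
  · linarith [mem_ge he0 hg2 hmono hS hx h]

/-- An element of `S` strictly between `0` and `2*m` is a generator. -/
private lemma gen_char (he0 : 0 < e) (hg2 : 2 ≤ g ⟨0, he0⟩) (hmono : StrictMono g)
    (hS : S = {x : ℤ | ∃ a : Fin e → ℕ, x = ∑ i, (a i : ℤ) * g i})
    {x : ℤ} (hx : x ∈ S) (hpos : 0 < x) (hlt : x < 2 * g ⟨0, he0⟩) : ∃ j, x = g j := by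
  set m := g ⟨0, he0⟩ with hm
  obtain ⟨a, ha⟩ := (memS hS).mp hx
  have hsum : ((∑ i, a i : ℕ) : ℤ) * m ≤ x := by
    rw [ha]
    push_cast
    rw [Finset.sum_mul]
    refine Finset.sum_le_sum fun i _ => ?_
    have h3 : m ≤ g i := hmono.monotone (by simp [Fin.le_def])
    exact mul_le_mul_of_nonneg_left h3 (Int.natCast_nonneg _)
  have hk1 : (∑ i, a i) = 1 := by
    rcases Nat.lt_or_ge (∑ i, a i) 2 with h | h
    · interval_cases h' : (∑ i, a i)
      · exfalso
        have : ∀ i ∈ Finset.univ, a i = 0 := by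
          intro i _
          exact Finset.sum_eq_zero_iff.mp h' i (Finset.mem_univ i)
        have : x = 0 := by
          rw [ha]; exact Finset.sum_eq_zero fun i hi => by simp [this i hi]
        omega
      · rfl
    · exfalso
      have : (2 : ℤ) ≤ ((∑ i, a i : ℕ) : ℤ) := by exact_mod_cast h
      nlinarith
  obtain ⟨i, _, hi⟩ := Finset.exists_ne_zero_of_sum_ne_zero (by omega : (∑ i, a i) ≠ 0)
  have hai : a i = 1 := by
    have : a i ≤ ∑ j, a j :=
      Finset.single_le_sum (f := fun j => a j) (fun _ _ => Nat.zero_le _) (Finset.mem_univ i)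
    omega
  refine ⟨i, ?_⟩
  rw [ha, Finset.sum_eq_single i]
  · simp [hai]
  · intro b _ hb
    have : a b = 0 := by
      have hpair : a i + a b ≤ ∑ j, a j := by
        have : ({i, b} : Finset (Fin e)) ⊆ Finset.univ := Finset.subset_univ _
        calc a i + a b = ∑ j ∈ ({i, b} : Finset (Fin e)), a j := by
              rw [Finset.sum_pair (Ne.symm hb)]
          _ ≤ ∑ j, a j := Finset.sum_le_sum_of_subset this
      omega
    simp [this]
  · simp



/-- The "bad" gaps: in `[0,F]`, not in `S`, and with symmetric partner also not in `S`. -/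
def Bad (S : Set ℤ) (F : ℤ) : Set ℤ := {x | x ∈ Set.Icc 0 F ∧ x ∉ S ∧ F - x ∉ S}

private lemma count_le (S : Set ℤ) (F : ℤ) (n : ℕ) (hF0 : 0 ≤ F)
    (hn : n = (S ∩ Set.Icc 0 F).ncard) :
    F + 1 ≤ 2 * (n : ℤ) + ((Bad S F).ncard : ℤ) := by
  classical
  set NS := S ∩ Set.Icc 0 F with hNS
  have hNSfin : NS.Finite := (Set.finite_Icc 0 F).subset Set.inter_subset_right
  set G := Set.Icc 0 F \ S with hG
  have hGfin : G.Finite := (Set.finite_Icc 0 F).subset Set.diff_subset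
  have hsplit : Set.Icc (0 : ℤ) F = NS ∪ G := by
    ext x
    simp only [hNS, hG, Set.mem_union, Set.mem_inter_iff, Set.mem_diff]
    by_cases h : x ∈ S <;> tauto
  have hdisj : Disjoint NS G := by
    rw [Set.disjoint_left]
    rintro x ⟨hxS, _⟩ ⟨_, hxS'⟩
    exact hxS' hxS
  have hIcc : (Set.Icc (0 : ℤ) F).ncard = (F + 1).toNat := by
    rw [Set.ncard_eq_toFinset_card', Set.toFinset_Icc, Int.card_Icc]
    simp
  have hcard : (F + 1).toNat = n + G.ncard := by
    rw [← hIcc, hsplit, Set.ncard_union_eq hdisj hNSfin hGfin, hn]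
  -- T1
  set T1 := {x ∈ G | F - x ∈ S} with hT1
  have hT1fin : T1.Finite := hGfin.subset (Set.sep_subset _ _)
  have hT1im : (fun x => F - x) '' T1 ⊆ NS := by
    rintro _ ⟨x, ⟨⟨hxI, _⟩, hx3⟩, rfl⟩
    rw [Set.mem_Icc] at hxI
    refine ⟨hx3, Set.mem_Icc.mpr ⟨?_, ?_⟩⟩
    · show 0 ≤ F - x; linarith [hxI.1, hxI.2]
    · show F - x ≤ F; linarith [hxI.1]
  have hT1card : T1.ncard ≤ n := by
    rw [hn, ← Set.ncard_image_of_injOn (f := fun x => F - x)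
      (fun x _ y _ h => by have h' : F - x = F - y := h; linarith)]
    exact Set.ncard_le_ncard hT1im hNSfin
  have hGsub : G ⊆ T1 ∪ Bad S F := by
    intro x hx
    by_cases h : F - x ∈ S
    · exact Or.inl ⟨hx, h⟩
    · exact Or.inr ⟨hx.1, hx.2, h⟩
  have hBadfin : (Bad S F).Finite := (Set.finite_Icc 0 F).subset fun x hx => hx.1
  have hGcard : G.ncard ≤ T1.ncard + (Bad S F).ncard :=
    le_trans (Set.ncard_le_ncard hGsub (hT1fin.union hBadfin)) (Set.ncard_union_le _ _)
  have h1 : ((F + 1).toNat : ℤ) = F + 1 := Int.toNat_of_nonneg (by linarith)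
  have : (F + 1).toNat ≤ n + (T1.ncard + (Bad S F).ncard) := by omega
  have h2 : ((F+1).toNat : ℤ) ≤ (n : ℤ) + ((T1.ncard : ℤ) + ((Bad S F).ncard : ℤ)) := by
    exact_mod_cast this
  have h3 : (T1.ncard : ℤ) ≤ (n : ℤ) := by exact_mod_cast hT1card
  linarith


end ASWilf

section Test
open ASWilf
variable {e : ℕ} {g : Fin e → ℤ} {S PF : Set ℤ}

private lemma bad_bound (he0 : 0 < e) (hg2 : 2 ≤ g ⟨0, he0⟩) (hmono : StrictMono g)
    (hS : S = {x : ℤ | ∃ a : Fin e → ℕ, x = ∑ i, (a i : ℤ) * g i})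
    (F : ℤ) (hmF : g ⟨0, he0⟩ ≤ F)
    (n : ℕ) (hn : n = (S ∩ Set.Icc 0 F).ncard)
    (hPF : PF = {x : ℤ | x ∉ S ∧ ∀ s ∈ S, s ≠ 0 → x + s ∈ S})
    (hAS : ∀ x : ℤ, x ∉ S → F - x ∈ S ∨ (x ∈ PF ∧ F - x ∈ PF)) :
    (Bad S F).ncard + 3 ≤ n + e ∧ 2 ≤ n := by
  classical
  set m := g ⟨0, he0⟩ with hm
  have hm2 : 2 ≤ m := hg2
  have hmS : m ∈ S := gen_mem hS _
  have hzero : (0 : ℤ) ∈ S := zero_mem hS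
  have hBadfin : (Bad S F).Finite := (Set.finite_Icc 0 F).subset fun x hx => hx.1
  set A := {x ∈ Bad S F | x + m ≤ F} with hA
  set B := {x ∈ Bad S F | F < x + m} with hB
  have hAfin : A.Finite := hBadfin.subset (Set.sep_subset _ _)
  have hBfin : B.Finite := hBadfin.subset (Set.sep_subset _ _)
  have hsub : Bad S F ⊆ A ∪ B := by
    intro x hx
    by_cases h : x + m ≤ F
    · exact Or.inl ⟨hx, h⟩
    · exact Or.inr ⟨hx, by linarith⟩
  have hPFx : ∀ x ∈ Bad S F, x ∈ PF ∧ F - x ∈ PF := fun x hx =>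
    (hAS x hx.2.1).resolve_left hx.2.2
  set NS := S ∩ Set.Icc 0 F with hNS
  have hNSfin : NS.Finite := (Set.finite_Icc 0 F).subset Set.inter_subset_right
  have hpairsub : ({0, m} : Set ℤ) ⊆ NS := by
    rintro x (rfl | rfl)
    · exact ⟨hzero, Set.mem_Icc.mpr ⟨le_refl _, by linarith⟩⟩
    · exact ⟨hmS, Set.mem_Icc.mpr ⟨by linarith, hmF⟩⟩
  have h0m : (0 : ℤ) ≠ m := by linarith
  have hn2 : 2 ≤ n := by
    rw [hn, ← Set.ncard_pair h0m]
    exact Set.ncard_le_ncard hpairsub hNSfin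
  -- bound on A
  have hAim : (fun x => x + m) '' A ⊆ NS \ {0, m} := by
    rintro _ ⟨x, ⟨hxB, hxm⟩, rfl⟩
    have hxI := hxB.1
    have hxS := hxB.2.1
    have hFxS := hxB.2.2
    have hxPF := (hPFx x hxB).1
    rw [hPF] at hxPF
    have hxmS : x + m ∈ S := hxPF.2 m hmS (by linarith)
    rw [Set.mem_Icc] at hxI
    have hx0 : x ≠ 0 := fun h => hxS (h ▸ hzero)
    refine ⟨⟨hxmS, Set.mem_Icc.mpr ⟨?_, ?_⟩⟩, ?_⟩
    · show 0 ≤ x + m; linarith [hxI.1]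
    · exact hxm
    · simp only [Set.mem_insert_iff, Set.mem_singleton_iff]
      push_neg
      constructor
      · show x + m ≠ 0; have := hxI.1; omega
      · show x + m ≠ m; have := hxI.1; omega
  have hAcard : A.ncard + 2 ≤ n := by
    have h1 : A.ncard = ((fun x => x + m) '' A).ncard :=
      (Set.ncard_image_of_injOn (fun x _ y _ h => by linarith)).symm
    have h2 : ((fun x => x + m) '' A).ncard ≤ (NS \ {0, m}).ncard :=
      Set.ncard_le_ncard hAim hNSfin.diff
    have h3 : (NS \ ({0, m} : Set ℤ)).ncard = n - 2 := by
      rw [Set.ncard_diff hpairsub, Set.ncard_pair h0m, hn]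
    omega
  -- bound on B
  have hrange : (Set.range g).ncard = e := by
    rw [Set.ncard_eq_toFinset_card', Set.toFinset_range,
      Finset.card_image_of_injective _ hmono.injective, Finset.card_univ, Fintype.card_fin]
  have hBim : (fun x => F - x + m) '' B ⊆ Set.range g \ {m} := by
    rintro _ ⟨x, ⟨hxB, hxm⟩, rfl⟩
    obtain ⟨hxI, hxS, hFxS⟩ := hxB
    rw [Set.mem_Icc] at hxI
    have hq := (hPFx x ⟨Set.mem_Icc.mpr hxI, hxS, hFxS⟩).2
    rw [hPF] at hq
    have hqS : F - x + m ∈ S := hq.2 m hmS (by linarith)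
    have hqpos : (0 : ℤ) < F - x + m := by linarith [hxI.2]
    have hqlt : F - x + m < 2 * m := by linarith
    obtain ⟨j, hj⟩ := gen_char he0 hg2 hmono hS hqS hqpos hqlt
    refine ⟨⟨j, hj.symm⟩, ?_⟩
    simp only [Set.mem_singleton_iff]
    have hFx0 : F - x ≠ 0 := fun h => hFxS (h ▸ hzero)
    show F - x + m ≠ m
    omega
  have hBcard : B.ncard + 1 ≤ e := by
    have h1 : B.ncard = ((fun x => F - x + m) '' B).ncard :=
      (Set.ncard_image_of_injOn (fun x _ y _ h => by linarith)).symm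
    have h2 : ((fun x => F - x + m) '' B).ncard ≤ (Set.range g \ {m}).ncard :=
      Set.ncard_le_ncard hBim (Set.finite_range g).diff
    have hmem : m ∈ Set.range g := ⟨⟨0, he0⟩, rfl⟩
    have h3 : (Set.range g \ ({m} : Set ℤ)).ncard = e - 1 := by
      rw [Set.ncard_diff (Set.singleton_subset_iff.mpr hmem) (Set.finite_singleton m),
        Set.ncard_singleton, hrange]
    omega
  refine ⟨?_, hn2⟩
  have hmain : (Bad S F).ncard ≤ A.ncard + B.ncard :=
    le_trans (Set.ncard_le_ncard hsub (hAfin.union hBfin)) (Set.ncard_union_le _ _)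
  omega

private lemma small_case (he0 : 0 < e) (hg2 : 2 ≤ g ⟨0, he0⟩) (hmono : StrictMono g)
    (hS : S = {x : ℤ | ∃ a : Fin e → ℕ, x = ∑ i, (a i : ℤ) * g i})
    (F : ℤ) (hFmax : ∀ x : ℤ, x ∉ S → x ≤ F) (hF1 : 1 ≤ F) (hFm : F < g ⟨0, he0⟩)
    (n : ℕ) (hn : n = (S ∩ Set.Icc 0 F).ncard) :
    F + 1 ≤ (e : ℤ) * (n : ℤ) := by
  classical
  set m := g ⟨0, he0⟩ with hm
  have hm2 : 2 ≤ m := hg2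
  have hzero : (0 : ℤ) ∈ S := zero_mem hS
  have hione : Set.Ico m (2 * m) ⊆ Set.range g := by
    intro x hx
    rw [Set.mem_Ico] at hx
    have hxS : x ∈ S := by
      by_contra h
      exact absurd (hFmax x h) (by linarith [hx.1])
    rcases eq_or_lt_of_le hx.1 with h | h
    · exact ⟨⟨0, he0⟩, h⟩
    · obtain ⟨j, hj⟩ := gen_char he0 hg2 hmono hS hxS (by linarith) hx.2
      exact ⟨j, hj.symm⟩
  have hcardIco : (Set.Ico m (2 * m)).ncard = m.toNat := by
    rw [Set.ncard_eq_toFinset_card', Set.toFinset_Ico, Int.card_Ico]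
    congr 1
    ring
  have hrange : (Set.range g).ncard = e := by
    rw [Set.ncard_eq_toFinset_card', Set.toFinset_range,
      Finset.card_image_of_injective _ hmono.injective, Finset.card_univ, Fintype.card_fin]
  have hme : m.toNat ≤ e := by
    rw [← hcardIco, ← hrange]
    exact Set.ncard_le_ncard hione (Set.finite_range g)
  have hn1 : 1 ≤ n := by
    rw [hn, ← Set.ncard_singleton (0 : ℤ)]
    refine Set.ncard_le_ncard ?_ ((Set.finite_Icc 0 F).subset Set.inter_subset_right)
    rintro x rfl
    exact ⟨hzero, Set.mem_Icc.mpr ⟨le_refl _, by linarith⟩⟩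
  have hmn : (m.toNat : ℤ) = m := Int.toNat_of_nonneg (by linarith)
  have h1 : (m.toNat : ℤ) ≤ (e : ℤ) := by exact_mod_cast hme
  have h2 : (1 : ℤ) ≤ (n : ℤ) := by exact_mod_cast hn1
  nlinarith

private lemma sylvester (a b : ℤ) (ha : 2 ≤ a) (hab : a < b) (hcop : IsCoprime a b)
    (hS2 : ∀ x : ℤ, x ∈ S ↔ ∃ u v : ℕ, x = (u : ℤ) * a + (v : ℤ) * b)
    (F : ℤ) (hF : F ∉ S) (hFmax : ∀ x : ℤ, x ∉ S → x ≤ F) :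
    ∀ x : ℤ, x ∉ S → F - x ∈ S := by
  classical
  have hb3 : 3 ≤ b := by linarith
  have hb0 : (0 : ℤ) < b := by linarith
  obtain ⟨p, q, hpq⟩ := id hcop
  -- representation with 0 ≤ u < b
  have hrep : ∀ x : ℤ, ∃ u v : ℤ, 0 ≤ u ∧ u < b ∧ x = u * a + v * b := by
    intro x
    refine ⟨(x * p) % b, x * q + ((x * p) / b) * a, Int.emod_nonneg _ (by linarith),
      Int.emod_lt_of_pos _ hb0, ?_⟩
    have hmd := Int.emod_add_mul_ediv (x * p) b
    linear_combination (-a) * hmd - x * hpq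
  have hnotmem : ∀ u v : ℤ, 0 ≤ u → u < b → v < 0 → u * a + v * b ∉ S := by
    intro u v hu hub hv hmem
    obtain ⟨c, d, hcd⟩ := (hS2 _).mp hmem
    have hc0 : (0 : ℤ) ≤ (c : ℤ) := Int.natCast_nonneg _
    have hd0 : (0 : ℤ) ≤ (d : ℤ) := Int.natCast_nonneg _
    have h1 : ((c : ℤ) - u) * a = (v - d) * b := by linarith [hcd]
    have h2 : b ∣ ((c : ℤ) - u) * a := ⟨v - d, by linarith [h1]⟩
    have h3 : b ∣ ((c : ℤ) - u) := (hcop.symm).dvd_of_dvd_mul_right h2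
    obtain ⟨k, hk⟩ := h3
    rcases lt_trichotomy k 0 with hk0 | hk0 | hk0
    · have : k ≤ -1 := by omega
      nlinarith
    · subst hk0
      have hcu : (c : ℤ) = u := by linarith [hk]
      have : v * b = (d : ℤ) * b := by nlinarith [hcd, hcu]
      have : v = (d : ℤ) := by
        have := mul_right_cancel₀ (by linarith : b ≠ 0) this
        exact this
      linarith
    · have hk1 : 1 ≤ k := hk0
      have : (c : ℤ) ≥ u + b := by nlinarith [hk]
      nlinarith [hcd]
  have hFval : F = a * b - a - b := by
    have hni : a * b - a - b ∉ S := by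
      have h := hnotmem (b - 1) (-1) (by linarith) (by linarith) (by norm_num)
      have heq : (b - 1) * a + (-1) * b = a * b - a - b := by ring
      rwa [heq] at h
    have hbig : ∀ y : ℤ, a * b - a - b < y → y ∈ S := by
      intro y hy
      obtain ⟨u, v, hu, hub, huv⟩ := hrep y
      have hv : 0 ≤ v := by nlinarith
      exact (hS2 y).mpr ⟨u.toNat, v.toNat, by
        rw [Int.toNat_of_nonneg hu, Int.toNat_of_nonneg hv]; exact huv⟩
    have hle : F ≤ a * b - a - b := by
      by_contra h
      push_neg at h
      exact hF (hbig F h)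
    have hge : a * b - a - b ≤ F := hFmax _ hni
    linarith
  intro x hx
  obtain ⟨u, v, hu, hub, huv⟩ := hrep x
  have hv : v < 0 := by
    by_contra h
    push_neg at h
    exact hx ((hS2 x).mpr ⟨u.toNat, v.toNat, by
      rw [Int.toNat_of_nonneg hu, Int.toNat_of_nonneg h]; exact huv⟩)
  refine (hS2 _).mpr ⟨(b - 1 - u).toNat, (-1 - v).toNat, ?_⟩
  rw [Int.toNat_of_nonneg (by linarith), Int.toNat_of_nonneg (by linarith)]
  rw [hFval]
  linarith [huv]

end Test

/-- **Corollary: almost-symmetric numerical semigroups satisfy Wilf's conjecture.**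
Let `2 ≤ g₁ < g₂ < … < g_e` be coprime positive integers forming a minimal generating
system of the numerical semigroup `S = ⟨g₁,…,g_e⟩`, let `F = max (ℤ \ S)` be the
Frobenius number and `n = |S ∩ [0, F]|`.  If `S` is almost-symmetric (for every
`x ∉ S`, either `F − x ∈ S` or both `x` and `F − x` are pseudo-Frobenius numbers),
then `F + 1 ≤ e·n`. -/
theorem almost_symmetric_wilf
    (e : ℕ) (he : 2 ≤ e) (g : Fin e → ℤ)
    (hg2 : 2 ≤ g ⟨0, by omega⟩)
    (hmono : StrictMono g)
    (hcop : Finset.univ.gcd g = 1)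
    (S : Set ℤ)
    (hS : S = {x : ℤ | ∃ a : Fin e → ℕ, x = ∑ i, (a i : ℤ) * g i})
    (hmingen : ∀ i : Fin e, ¬∃ a : Fin e → ℕ, a i = 0 ∧ g i = ∑ j, (a j : ℤ) * g j)
    (F : ℤ) (hF : F ∉ S) (hFmax : ∀ x : ℤ, x ∉ S → x ≤ F)
    (n : ℕ) (hn : n = (S ∩ Set.Icc 0 F).ncard)
    (PF : Set ℤ) (hPF : PF = {x : ℤ | x ∉ S ∧ ∀ s ∈ S, s ≠ 0 → x + s ∈ S})
    (hAS : ∀ x : ℤ, x ∉ S → F - x ∈ S ∨ (x ∈ PF ∧ F - x ∈ PF)) :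
    F + 1 ≤ (e : ℤ) * (n : ℤ) := by
  classical
  have he0 : 0 < e := by omega
  have hg2' : 2 ≤ g ⟨0, he0⟩ := hg2
  have hzero : (0 : ℤ) ∈ S := ASWilf.zero_mem hS
  have hone : (1 : ℤ) ∉ S := by
    intro h
    have := ASWilf.mem_ge he0 hg2' hmono hS h one_ne_zero
    linarith
  have hF1 : 1 ≤ F := hFmax 1 hone
  have hcount := ASWilf.count_le S F n (by linarith) hn
  rcases eq_or_lt_of_le he with he2 | he3
  · -- `e = 2` : the semigroup is symmetric (Sylvester)
    subst he2
    set a := g 0 with hadef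
    set b := g 1 with hbdef
    have hab : a < b := hmono (by decide : (0 : Fin 2) < 1)
    have ha2 : 2 ≤ a := hg2'
    have hS2 : ∀ x : ℤ, x ∈ S ↔ ∃ u v : ℕ, x = (u : ℤ) * a + (v : ℤ) * b := by
      intro x
      rw [ASWilf.memS hS]
      constructor
      · rintro ⟨c, rfl⟩
        exact ⟨c 0, c 1, by rw [Fin.sum_univ_two]⟩
      · rintro ⟨u, v, rfl⟩
        exact ⟨![u, v], by rw [Fin.sum_univ_two]; simp; rfl⟩
    have hcop2 : IsCoprime a b := by
      have hb0 : (0 : ℤ) ≤ b := by linarith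
      have huniv : (Finset.univ : Finset (Fin 2)) = {0, 1} := by decide
      rw [huniv, Finset.gcd_insert, Finset.gcd_singleton] at hcop
      rw [Int.normalize_of_nonneg hb0] at hcop
      have hgcd : Int.gcd a b = 1 := by
        have h : (↑(Int.gcd a b) : ℤ) = 1 := by rw [Int.coe_gcd]; exact hcop
        exact_mod_cast h
      exact Int.isCoprime_iff_gcd_eq_one.mpr hgcd
    have hsym := sylvester a b ha2 hab hcop2 hS2 F hF hFmax
    have hbad : ASWilf.Bad S F = ∅ := by
      ext x
      simp only [ASWilf.Bad, Set.mem_setOf_eq, Set.mem_empty_iff_false, iff_false, not_and]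
      intro _ hxS hFxS
      exact hFxS (hsym x hxS)
    rw [hbad] at hcount
    simp only [Set.ncard_empty, Nat.cast_zero, add_zero] at hcount
    push_cast
    linarith
  · rcases le_or_gt (g ⟨0, he0⟩) F with hmF | hFm
    · obtain ⟨hbb, hn2⟩ := bad_bound he0 hg2' hmono hS F hmF n hn hPF hAS
      have h1 : ((ASWilf.Bad S F).ncard : ℤ) + 3 ≤ (n : ℤ) + (e : ℤ) := by exact_mod_cast hbb
      have h2 : (2 : ℤ) ≤ (n : ℤ) := by exact_mod_cast hn2
      have h3 : (3 : ℤ) ≤ (e : ℤ) := by exact_mod_cast he3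
      nlinarith [mul_nonneg (by linarith : (0 : ℤ) ≤ (e : ℤ) - 3)
        (by linarith : (0 : ℤ) ≤ (n : ℤ) - 1)]
    · exact small_case he0 hg2' hmono hS F hFmax hF1 hFm n hn
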